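/- If g ∈ ℓ²(V) is a nonzero eigenfunction of the combinatorial Laplacian of the Kagome lattice, Δ_comb g = μ g, then μ = 3/2. -/

import Mathlib

section

open Complex

/-- `w₁ = 1`. -/
noncomputable def kagomeW₁ : ℂ := 1

/-- `w₂ = e^{iπ/3}`. -/
noncomputable def kagomeW₂ : ℂ := Complex.exp (Real.pi * Complex.I / 3)

/-- The vertex set of the Kagome lattice:
`V = (2ℤw₁+2ℤw₂) ∪ (w₁+2ℤw₁+2ℤw₂) ∪ (w₂+2ℤw₁+2ℤw₂) ⊂ ℂ`. -/
def kagomeV : Set ℂ :=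
  {v | ∃ m n : ℤ,
      v = 2 * (m : ℂ) * kagomeW₁ + 2 * (n : ℂ) * kagomeW₂ ∨
      v = kagomeW₁ + 2 * (m : ℂ) * kagomeW₁ + 2 * (n : ℂ) * kagomeW₂ ∨
      v = kagomeW₂ + 2 * (m : ℂ) * kagomeW₁ + 2 * (n : ℂ) * kagomeW₂}

/-- Adjacency in the Kagome lattice: two vertices at Euclidean distance `1`. -/
def kagomeAdj (v w : ℂ) : Prop :=
  v ∈ kagomeV ∧ w ∈ kagomeV ∧ ‖v - w‖ = 1

/-- The combinatorial (normalized) Laplacian of the Kagome lattice: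
`(Δ F)(v) = (1/deg v) ∑_{w∼v} (F(v) - F(w))`, where every vertex has degree `4`.
(The sum over the finitely many neighbours is expressed as a `tsum`.) -/
noncomputable def kagomeLap (F : ℂ → ℝ) (v : ℂ) : ℝ :=
  (1 / 4) * ∑' w : {w : ℂ // kagomeAdj v w}, (F v - F (w : ℂ))

end

open Finset

private lemma summable_sq_add {f g : ℤ → ℂ}
    (hf : Summable (fun n => ‖f n‖ ^ 2)) (hg : Summable (fun n => ‖g n‖ ^ 2)) :
    Summable (fun n => ‖f n + g n‖ ^ 2) := by
  apply Summable.of_nonneg_of_le (fun n => by positivity)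
    (fun n => ?_) ((hf.add hg).mul_left 2)
  have h1 : ‖f n + g n‖ ≤ ‖f n‖ + ‖g n‖ := norm_add_le _ _
  have h2 : (0:ℝ) ≤ ‖f n‖ := norm_nonneg _
  have h3 : (0:ℝ) ≤ ‖g n‖ := norm_nonneg _
  have h4 : ‖f n + g n‖ ^ 2 ≤ (‖f n‖ + ‖g n‖) ^ 2 :=
    pow_le_pow_left₀ (norm_nonneg _) h1 2
  nlinarith [sq_nonneg (‖f n‖ - ‖g n‖)]

private lemma rec_forward {c : ℤ → ℂ} {B T : ℤ} (hcB : c B ≠ 0)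
    (h : ℤ → ℂ) (heq : ∀ n, ∑ t ∈ Finset.Icc B T, c t * h (n - t) = 0)
    (k : ℤ) (hwin : ∀ j, k ≤ j → j < k + (T - B) → h j = 0)
    (hd : B ≤ T) :
    ∀ j, k ≤ j → h j = 0 := by
  have key : ∀ d : ℕ, h (k + d) = 0 := by
    intro d
    induction d using Nat.strong_induction_on with
    | _ d IH =>
      by_cases hcase : (k + (d:ℤ)) < k + (T - B)
      · exact hwin _ (by omega) hcase
      · have hBmem : B ∈ Finset.Icc B T := Finset.mem_Icc.mpr ⟨le_refl _, hd⟩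
        have heq' := heq (k + d + B)
        rw [← Finset.add_sum_erase _ _ hBmem] at heq'
        have hz : ∑ t ∈ (Finset.Icc B T).erase B, c t * h (k + d + B - t) = 0 := by
          apply Finset.sum_eq_zero
          intro t ht
          obtain ⟨htne, htmem⟩ := Finset.mem_erase.mp ht
          obtain ⟨h1, h2⟩ := Finset.mem_Icc.mp htmem
          have hBt : B < t := lt_of_le_of_ne h1 (Ne.symm htne)
          have hj : k ≤ k + d + B - t := by omega
          set d' : ℕ := (k + d + B - t - k).toNat with hd'
          have hdd : (d' : ℤ) = k + d + B - t - k := Int.toNat_of_nonneg (by omega)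
          have hlt : d' < d := by omega
          have := IH d' hlt
          have hrw : k + d + B - t = k + (d' : ℤ) := by omega
          rw [hrw, this, mul_zero]
        rw [hz, add_zero] at heq'
        have : h (k + d + B - B) = 0 := by
          rcases mul_eq_zero.mp heq' with h' | h'
          · exact absurd h' hcB
          · exact h'
        simpa using this
  intro j hj
  have : j = k + ((j - k).toNat : ℤ) := by
    rw [Int.toNat_of_nonneg (by omega)]; ring
  rw [this]; exact key _

private lemma rec_backward {c : ℤ → ℂ} {B T : ℤ} (hcT : c T ≠ 0)
    (h : ℤ → ℂ) (heq : ∀ n, ∑ t ∈ Finset.Icc B T, c t * h (n - t) = 0)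
    (k : ℤ) (hwin : ∀ j, k ≤ j → j < k + (T - B) → h j = 0)
    (hd : B ≤ T) :
    ∀ j, j < k + (T - B) → h j = 0 := by
  have key : ∀ d : ℕ, h (k + (T - B) - 1 - d) = 0 := by
    intro d
    induction d using Nat.strong_induction_on with
    | _ d IH =>
      by_cases hcase : k ≤ k + (T - B) - 1 - (d:ℤ)
      · exact hwin _ hcase (by omega)
      · have hTmem : T ∈ Finset.Icc B T := Finset.mem_Icc.mpr ⟨hd, le_refl _⟩
        have heq' := heq (k + (T - B) - 1 - d + T)
        rw [← Finset.add_sum_erase _ _ hTmem] at heq'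
        have hz : ∑ t ∈ (Finset.Icc B T).erase T,
            c t * h (k + (T - B) - 1 - d + T - t) = 0 := by
          apply Finset.sum_eq_zero
          intro t ht
          obtain ⟨htne, htmem⟩ := Finset.mem_erase.mp ht
          obtain ⟨h1, h2⟩ := Finset.mem_Icc.mp htmem
          have hTt : t < T := lt_of_le_of_ne h2 htne
          set d' : ℕ := (k + (T - B) - 1 - (k + (T - B) - 1 - d + T - t)).toNat with hd'
          have hdd : (d' : ℤ) = (d : ℤ) - (T - t) := by
            rw [hd', Int.toNat_of_nonneg (by omega)]; ring
          have hlt : d' < d := by omega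
          have := IH d' hlt
          have hrw : k + (T - B) - 1 - d + T - t = k + (T - B) - 1 - (d' : ℤ) := by omega
          rw [hrw, this, mul_zero]
        rw [hz, add_zero] at heq'
        have : h (k + (T - B) - 1 - d + T - T) = 0 := by
          rcases mul_eq_zero.mp heq' with h' | h'
          · exact absurd h' hcT
          · exact h'
        have hrw : k + (T - B) - 1 - (d:ℤ) + T - T = k + (T - B) - 1 - d := by ring
        rwa [hrw] at this
  intro j hj
  have : j = k + (T - B) - 1 - ((k + (T - B) - 1 - j).toNat : ℤ) := by
    rw [Int.toNat_of_nonneg (by omega)]; ring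
  rw [this]; exact key _

/-- A square-summable two-sided solution of a nondegenerate linear recurrence vanishes. -/
lemma l2_recurrence_zero {c : ℤ → ℂ} {B T : ℤ} (hBT : B ≤ T)
    (hcB : c B ≠ 0) (hcT : c T ≠ 0)
    (h : ℤ → ℂ) (hsum : Summable (fun n => ‖h n‖ ^ 2))
    (heq : ∀ n, ∑ t ∈ Finset.Icc B T, c t * h (n - t) = 0) :
    ∀ n, h n = 0 := by
  rcases eq_or_lt_of_le hBT with hBTeq | hBTlt
  · -- order-zero recurrence
    subst hBTeq
    intro n
    have := heq (n + B)
    simp only [Finset.Icc_self, Finset.sum_singleton] at this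
    have h2 : h (n + B - B) = 0 := by
      rcases mul_eq_zero.mp this with h' | h'
      · exact absurd h' hcB
      · exact h'
    simpa using h2
  by_contra hcon
  push_neg at hcon
  obtain ⟨n0, hn0⟩ := hcon
  -- the solution space
  set W : Submodule ℂ (ℤ → ℂ) :=
    { carrier := {f | (∀ n, ∑ t ∈ Finset.Icc B T, c t * f (n - t) = 0) ∧
        Summable (fun n => ‖f n‖ ^ 2)}
      add_mem' := by
        rintro f g ⟨hf1, hf2⟩ ⟨hg1, hg2⟩
        refine ⟨fun n => ?_, summable_sq_add hf2 hg2⟩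
        have : ∑ t ∈ Finset.Icc B T, (c t * f (n - t) + c t * g (n - t)) = 0 := by
          rw [Finset.sum_add_distrib, hf1 n, hg1 n, add_zero]
        simpa [mul_add] using this
      zero_mem' := by
        refine ⟨fun n => by simp, ?_⟩
        simpa using summable_zero
      smul_mem' := by
        rintro a f ⟨hf1, hf2⟩
        constructor
        · intro n
          have : a * ∑ t ∈ Finset.Icc B T, c t * f (n - t) = 0 := by rw [hf1 n, mul_zero]
          rw [Finset.mul_sum] at this
          simpa [Pi.smul_apply, smul_eq_mul, mul_left_comm] using this
        · have : Summable (fun n => ‖a‖ ^ 2 * ‖f n‖ ^ 2) := hf2.mul_left _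
          apply this.congr
          intro n
          simp [Pi.smul_apply, norm_smul, mul_pow]
      } with hWdef
  have hhW : h ∈ W := ⟨heq, hsum⟩
  -- number of initial conditions
  set M : ℕ := (T - B).toNat with hM
  -- window-vanishing implies zero
  have hwindow : ∀ f : ℤ → ℂ,
      (∀ n, ∑ t ∈ Finset.Icc B T, c t * f (n - t) = 0) →
      (∀ i : Fin M, f ((i : ℕ) : ℤ) = 0) → ∀ n, f n = 0 := by
    intro f hfeq hwin n
    have hw : ∀ j, 0 ≤ j → j < 0 + (T - B) → f j = 0 := by
      intro j hj1 hj2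
      have hi : (j.toNat) < M := by omega
      have := hwin ⟨j.toNat, hi⟩
      simpa [Int.toNat_of_nonneg hj1] using this
    rcases le_or_gt 0 n with hn | hn
    · exact rec_forward hcB f hfeq 0 hw hBT n hn
    · exact rec_backward hcT f hfeq 0 hw hBT n (by omega)
  -- evaluation map on a window
  set Φ : W →ₗ[ℂ] (Fin M → ℂ) :=
    { toFun := fun f i => (f : ℤ → ℂ) ((i : ℕ) : ℤ)
      map_add' := fun f g => by ext i; simp
      map_smul' := fun a f => by ext i; simp } with hΦ
  have hΦinj : Function.Injective Φ := by
    rw [injective_iff_map_eq_zero]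
    intro f hf
    have : ∀ i : Fin M, (f : ℤ → ℂ) ((i : ℕ) : ℤ) = 0 := by
      intro i; exact congrFun hf i
    have hz : ∀ n, (f : ℤ → ℂ) n = 0 := hwindow _ f.2.1 this
    ext n
    exact hz n
  have : FiniteDimensional ℂ W := FiniteDimensional.of_injective Φ hΦinj
  have : Nontrivial W := by
    refine ⟨⟨h, hhW⟩, 0, ?_⟩
    intro hcon2
    apply hn0
    have := congrFun (congrArg (Subtype.val) hcon2) n0
    simpa using this
  -- the shift operator
  set σ : Module.End ℂ W :=
    { toFun := fun f => ⟨fun n => (f : ℤ → ℂ) (n + 1),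
        by
          constructor
          · intro n
            have := f.2.1 (n + 1)
            rw [← this]
            apply Finset.sum_congr rfl
            intro t ht
            have e : n - t + 1 = n + 1 - t := by ring
            show c t * (f : ℤ → ℂ) (n - t + 1) = c t * (f : ℤ → ℂ) (n + 1 - t)
            rw [e]
          · have := f.2.2.comp_injective (add_left_injective (1 : ℤ))
            exact this⟩
      map_add' := fun f g => by ext n; simp
      map_smul' := fun a f => by ext n; simp } with hσ
  obtain ⟨γ, hγ⟩ := Module.End.exists_eigenvalue σ
  obtain ⟨v, hv⟩ := hγ.exists_hasEigenvector
  have hvrel : ∀ n : ℤ, (v : ℤ → ℂ) (n + 1) = γ * (v : ℤ → ℂ) n := by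
    intro n
    have h1 : σ v = γ • v := Module.End.mem_eigenspace_iff.mp hv.1
    have := congrFun (congrArg (Subtype.val) h1) n
    simpa [hσ, smul_eq_mul] using this
  have hvne : v ≠ 0 := hv.2
  rcases eq_or_ne γ 0 with hγ0 | hγ0
  · apply hvne
    ext n
    have := hvrel (n - 1)
    simp only [hγ0, zero_mul, sub_add_cancel] at this
    simpa using this
  · -- v n = γ ^ n * v 0
    have hpow : ∀ n : ℤ, (v : ℤ → ℂ) n = γ ^ n * (v : ℤ → ℂ) 0 := by
      intro n
      induction n using Int.induction_on with
      | zero => simp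
      | succ k ih =>
        rw [hvrel k, ih, zpow_add_one₀ hγ0]
        ring
      | pred k ih =>
        have hthis := hvrel (-(k : ℤ) - 1)
        rw [sub_add_cancel] at hthis
        have h2 : (v : ℤ → ℂ) (-(k:ℤ) - 1) = γ⁻¹ * (v : ℤ → ℂ) (-(k:ℤ)) := by
          rw [hthis, ← mul_assoc, inv_mul_cancel₀ hγ0, one_mul]
        rw [h2, ih, zpow_sub_one₀ hγ0]
        ring
    have hv0 : (v : ℤ → ℂ) 0 ≠ 0 := by
      intro h0
      apply hvne
      ext n
      rw [hpow n, h0, mul_zero]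
      rfl
    have hsumv := v.2.2
    set r : ℝ := ‖γ‖ ^ 2 with hr
    have hγpos : 0 < ‖γ‖ := norm_pos_iff.mpr hγ0
    have hrpos : 0 < r := by positivity
    have hv0pos : 0 < ‖(v : ℤ → ℂ) 0‖ := norm_pos_iff.mpr hv0
    have hC : ‖(v : ℤ → ℂ) 0‖ ^ 2 ≠ 0 := by positivity
    -- forward direction : r < 1
    have hfor : Summable (fun k : ℕ => r ^ k * ‖(v : ℤ → ℂ) 0‖ ^ 2) := by
      have h1 := hsumv.comp_injective (fun a b hab => by exact_mod_cast hab : Function.Injective (Nat.cast : ℕ → ℤ))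
      apply h1.congr
      intro k
      simp only [Function.comp_apply]
      rw [hpow (k : ℤ), zpow_natCast, norm_mul, norm_pow, mul_pow, hr, ← pow_mul, ← pow_mul,
        Nat.mul_comm]
    have hr1 : r < 1 := by
      have := (summable_mul_right_iff hC).mp hfor
      have := summable_geometric_iff_norm_lt_one.mp this
      rwa [Real.norm_eq_abs, abs_of_pos hrpos] at this
    -- backward direction : r⁻¹ < 1
    have hback : Summable (fun k : ℕ => (r⁻¹) ^ k * ‖(v : ℤ → ℂ) 0‖ ^ 2) := by
      have hinj : Function.Injective (fun k : ℕ => -(k : ℤ)) :=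
        fun a b hab => by
          have : (a : ℤ) = b := neg_injective hab
          exact_mod_cast this
      have h1 := hsumv.comp_injective hinj
      apply h1.congr
      intro k
      simp only [Function.comp_apply]
      rw [hpow (-(k : ℤ)), zpow_neg, zpow_natCast, norm_mul, norm_inv, norm_pow, mul_pow,
        inv_pow, inv_pow, hr]
      congr 2
      rw [← pow_mul, ← pow_mul, Nat.mul_comm]
    have hr2 : r⁻¹ < 1 := by
      have := (summable_mul_right_iff hC).mp hback
      have := summable_geometric_iff_norm_lt_one.mp this
      rwa [Real.norm_eq_abs, abs_of_pos (by positivity : (0:ℝ) < r⁻¹)] at this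
    have : (1 : ℝ) = r * r⁻¹ := (mul_inv_cancel₀ (ne_of_gt hrpos)).symm
    nlinarith

noncomputable section PrepSection

open MeasureTheory AddCircle

private lemma norm_fourier_one (n : ℤ) (x : AddCircle (1:ℝ)) : ‖fourier n x‖ = 1 := by
  rw [fourier_apply]
  exact Circle.norm_coe _

private lemma fourier_ne_zero (n : ℤ) (x : AddCircle (1:ℝ)) : fourier n x ≠ 0 := by
  intro h
  have := norm_fourier_one n x
  rw [h] at this
  norm_num at this

private lemma memF (s : ℤ) (F : Lp ℂ 2 (haarAddCircle : Measure (AddCircle (1:ℝ)))) :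
    MemLp (fun x => fourier s x * F x) 2 haarAddCircle := by
  refine MemLp.of_le (Lp.memLp F)
    (((map_continuous (fourier s)).aestronglyMeasurable).mul (Lp.aestronglyMeasurable F))
    (Filter.Eventually.of_forall fun x => ?_)
  rw [norm_mul, norm_fourier_one, one_mul]

/-- Multiplication of an `L²` function by the character `fourier s`. -/
private def mulF (s : ℤ) (F : Lp ℂ 2 (haarAddCircle : Measure (AddCircle (1:ℝ)))) :
    Lp ℂ 2 (haarAddCircle : Measure (AddCircle (1:ℝ))) :=
  (memF s F).toLp _

private lemma coeFn_mulF (s : ℤ) (F : Lp ℂ 2 (haarAddCircle : Measure (AddCircle (1:ℝ)))) :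
    ⇑(mulF s F) =ᵐ[haarAddCircle] fun x => fourier s x * F x :=
  (memF s F).coeFn_toLp

private lemma fourierCoeff_mulF (s m : ℤ)
    (F : Lp ℂ 2 (haarAddCircle : Measure (AddCircle (1:ℝ)))) :
    fourierCoeff (⇑(mulF s F)) m = fourierCoeff (⇑F) (m - s) := by
  rw [fourierCoeff, fourierCoeff]
  refine integral_congr_ae ?_
  filter_upwards [coeFn_mulF s F] with x hx
  rw [hx, smul_eq_mul, smul_eq_mul, ← mul_assoc, ← fourier_add]
  have e : -m + s = -(m - s) := by ring
  rw [e]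

private lemma lp_coe_sum {β : Type*} (s : Finset β) (x : β → lp (fun _ : ℤ => ℂ) 2) (i : ℤ) :
    (↑(∑ q ∈ s, x q) : ℤ → ℂ) i = ∑ q ∈ s, (↑(x q) : ℤ → ℂ) i := by
  classical
  induction s using Finset.induction_on with
  | empty => simp
  | insert _ _ h ih =>
      rw [Finset.sum_insert h, lp.coeFn_add, Pi.add_apply, ih, Finset.sum_insert h]

private lemma Lp_coe_sum_ae {α β : Type*} [MeasurableSpace α] {μ : Measure α} (s : Finset β)
    (x : β → Lp ℂ 2 μ) (g : β → α → ℂ) (hg : ∀ q ∈ s, ⇑(x q) =ᵐ[μ] g q) :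
    ⇑(∑ q ∈ s, x q) =ᵐ[μ] fun t => ∑ q ∈ s, g q t := by
  classical
  induction s using Finset.induction_on with
  | empty => simp only [Finset.sum_empty]; exact Lp.coeFn_zero ℂ 2 μ
  | @insert b s hb ih =>
      have h1 := Lp.coeFn_add (x b) (∑ q ∈ s, x q)
      have h2 := ih (fun q hq => hg q (Finset.mem_insert_of_mem hq))
      filter_upwards [h1, h2, hg b (Finset.mem_insert_self _ _)] with t ht1 ht2 ht3
      rw [Finset.sum_insert hb, ht1, Pi.add_apply, ht2, ht3, Finset.sum_insert hb]

end PrepSection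

open MeasureTheory AddCircle in
/-- A square-summable solution of a 2D convolution equation whose kernel has a unique
monomial on its top and bottom rows vanishes identically. -/
private lemma conv_l2_zero (a : ℤ × ℤ → ℂ) (S : Finset (ℤ × ℤ))
    (B T sB sT : ℤ) (hBT : B ≤ T)
    (hrange : ∀ q ∈ S, B ≤ q.1 ∧ q.1 ≤ T)
    (hmemT : (T, sT) ∈ S) (hmemB : (B, sB) ∈ S)
    (haT : a (T, sT) ≠ 0) (haB : a (B, sB) ≠ 0)
    (huT : ∀ q ∈ S, q.1 = T → q = (T, sT))
    (huB : ∀ q ∈ S, q.1 = B → q = (B, sB))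
    (H : ℤ × ℤ → ℂ) (hH : Summable fun p => ‖H p‖ ^ 2)
    (heq : ∀ v u : ℤ, ∑ q ∈ S, a q * H (v - q.1, u - q.2) = 0) :
    ∀ p, H p = 0 := by
  classical
  set μ : Measure (AddCircle (1:ℝ)) := haarAddCircle with hμ
  -- the rows of `H`, as elements of `ℓ²(ℤ)`
  have hrowsum : ∀ v : ℤ, Summable fun u => ‖H (v, u)‖ ^ 2 :=
    fun v => hH.comp_injective (fun u u' huu => by simpa using huu)
  have hrowmem : ∀ v : ℤ, Memℓp (fun u => H (v, u)) 2 := by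
    intro v
    apply memℓp_gen
    apply (hrowsum v).congr
    intro u
    have h2 : ((2 : ENNReal)).toReal = ((2:ℕ) : ℝ) := by norm_num
    rw [h2, Real.rpow_natCast]
  set row : ℤ → lp (fun _ : ℤ => ℂ) 2 := fun v => ⟨fun u => H (v, u), hrowmem v⟩ with hrowdef
  set f : ℤ → Lp ℂ 2 μ := fun v => fourierBasis.repr.symm (row v) with hfdef
  have hrepr : ∀ v, fourierBasis.repr (f v) = row v := fun v =>
    fourierBasis.repr.apply_symm_apply (row v)
  -- the convolution identity, in `L²`
  have hZ : ∀ v : ℤ, (∑ q ∈ S, a q • mulF q.2 (f (v - q.1))) = 0 := by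
    intro v
    rw [← (fourierBasis (T := 1)).repr.map_eq_zero_iff]
    apply lp.ext
    funext m
    rw [map_sum]
    rw [lp_coe_sum]
    have hterm : ∀ q ∈ S,
        (↑(fourierBasis.repr (a q • mulF q.2 (f (v - q.1)))) : ℤ → ℂ) m
          = a q * H (v - q.1, m - q.2) := by
      intro q hq
      rw [_root_.map_smul, lp.coeFn_smul, Pi.smul_apply, smul_eq_mul]
      congr 1
      rw [fourierBasis_repr, fourierCoeff_mulF, ← fourierBasis_repr, hrepr]
    rw [Finset.sum_congr rfl hterm, heq v m]
    simp
  -- pointwise a.e. version of the convolution identity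
  have hae1 : ∀ v : ℤ, ∀ᵐ x ∂μ,
      ∑ q ∈ S, a q * (fourier q.2 x * (f (v - q.1) : AddCircle (1:ℝ) → ℂ) x) = 0 := by
    intro v
    have hZcoe : ⇑(∑ q ∈ S, a q • mulF q.2 (f (v - q.1))) =ᵐ[μ]
        fun x => ∑ q ∈ S, a q * (fourier q.2 x * (f (v - q.1) : AddCircle (1:ℝ) → ℂ) x) := by
      apply Lp_coe_sum_ae
      intro q hq
      have h1 := Lp.coeFn_smul (a q) (mulF q.2 (f (v - q.1)))
      filter_upwards [h1, coeFn_mulF q.2 (f (v - q.1))] with x hx1 hx2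
      rw [hx1, Pi.smul_apply, hx2, smul_eq_mul]
    have hZ0 : ⇑(∑ q ∈ S, a q • mulF q.2 (f (v - q.1))) =ᵐ[μ] 0 :=
      Lp.eq_zero_iff_ae_eq_zero.mp (hZ v)
    filter_upwards [hZcoe, hZ0] with x hx1 hx2
    rw [← hx1, hx2]
    rfl
  -- a.e. square-summability of the fibers
  have hLa : ∀ v : ℤ, AEMeasurable
      (fun x => (‖(f v : AddCircle (1:ℝ) → ℂ) x‖₊ : ENNReal) ^ (2:ℕ)) μ :=
    fun v => ((Lp.aestronglyMeasurable (f v)).aemeasurable.enorm).pow_const 2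
  have hLv : ∀ v : ℤ, ∫⁻ x, (‖(f v : AddCircle (1:ℝ) → ℂ) x‖₊ : ENNReal) ^ (2:ℕ) ∂μ
      = (‖f v‖₊ : ENNReal) ^ (2:ℕ) := by
    intro v
    have h1 : eLpNorm (⇑(f v)) 2 μ
        = (∫⁻ x, (‖(f v : AddCircle (1:ℝ) → ℂ) x‖₊ : ENNReal) ^ (2:ℝ) ∂μ) ^ (1/(2:ℝ)) := by
      rw [eLpNorm_eq_lintegral_rpow_enorm_toReal two_ne_zero ENNReal.ofNat_ne_top]
      norm_num [enorm_eq_nnnorm]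
    have h2 : (eLpNorm (⇑(f v)) 2 μ) ^ (2:ℕ)
        = ∫⁻ x, (‖(f v : AddCircle (1:ℝ) → ℂ) x‖₊ : ENNReal) ^ (2:ℕ) ∂μ := by
      rw [h1, ← ENNReal.rpow_natCast _ 2, ← ENNReal.rpow_mul]
      have h3 : (1/(2:ℝ)) * ((2:ℕ):ℝ) = 1 := by norm_num
      rw [h3, ENNReal.rpow_one]
      exact lintegral_congr fun x => by rw [← ENNReal.rpow_natCast]; norm_num
    rw [← h2, Lp.nnnorm_def, ENNReal.coe_toNNReal (Lp.eLpNorm_ne_top (f v))]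
  have hsumnorm : Summable fun v : ℤ => ‖f v‖ ^ 2 := by
    have hsum2 : Summable fun v : ℤ => ∑' u : ℤ, ‖H (v, u)‖ ^ 2 :=
      ((summable_prod_of_nonneg (fun p => sq_nonneg _)).mp hH).2
    apply hsum2.congr
    intro v
    have hnr : ‖f v‖ = ‖row v‖ := fourierBasis.repr.symm.norm_map (row v)
    have h3 := lp.norm_rpow_eq_tsum (p := 2) (by norm_num) (row v)
    have h4 : ((2 : ENNReal)).toReal = ((2:ℕ) : ℝ) := by norm_num
    rw [h4] at h3
    simp only [Real.rpow_natCast] at h3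
    rw [hnr, h3]
  have hkey : ∫⁻ x, ∑' v : ℤ, (‖(f v : AddCircle (1:ℝ) → ℂ) x‖₊ : ENNReal) ^ (2:ℕ) ∂μ ≠ ⊤ := by
    rw [lintegral_tsum hLa]
    have h5 : ∑' v : ℤ, ∫⁻ x, (‖(f v : AddCircle (1:ℝ) → ℂ) x‖₊ : ENNReal) ^ (2:ℕ) ∂μ
        = ∑' v : ℤ, ((‖f v‖₊ ^ (2:ℕ) : NNReal) : ENNReal) :=
      tsum_congr fun v => by rw [hLv v, ENNReal.coe_pow]
    rw [h5]
    apply ENNReal.tsum_coe_ne_top_iff_summable.mpr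
    apply NNReal.summable_coe.mp
    apply hsumnorm.congr
    intro v
    push_cast
    ring
  have haesq : ∀ᵐ x ∂μ, Summable fun v : ℤ => ‖(f v : AddCircle (1:ℝ) → ℂ) x‖ ^ 2 := by
    filter_upwards [ae_lt_top' (AEMeasurable.ennreal_tsum hLa) hkey] with x hx
    have h6 : ∑' v : ℤ, ((‖(f v : AddCircle (1:ℝ) → ℂ) x‖₊ ^ (2:ℕ) : NNReal) : ENNReal) ≠ ⊤ := by
      have heq6 : ∀ v : ℤ, ((‖(f v : AddCircle (1:ℝ) → ℂ) x‖₊ ^ (2:ℕ) : NNReal) : ENNReal)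
          = ((‖(f v : AddCircle (1:ℝ) → ℂ) x‖₊ : ENNReal)) ^ (2:ℕ) := fun v => ENNReal.coe_pow _ _
      rw [tsum_congr heq6]
      exact hx.ne
    have h7 := ENNReal.tsum_coe_ne_top_iff_summable.mp h6
    have h8 := NNReal.summable_coe.mpr h7
    apply h8.congr
    intro v
    push_cast
    rfl
  -- conclude pointwise, using the one-dimensional recurrence lemma
  have hmain : ∀ᵐ x ∂μ, ∀ v : ℤ, (f v : AddCircle (1:ℝ) → ℂ) x = 0 := by
    filter_upwards [(ae_all_iff).mpr hae1, haesq] with x hx1 hx2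
    set c : ℤ → ℂ := fun t => ∑ q ∈ S, if q.1 = t then a q * fourier q.2 x else 0 with hcdef
    have hcT : c T = a (T, sT) * fourier sT x := by
      have h0 : ∀ q ∈ S, q ≠ (T, sT) → (if q.1 = T then a q * fourier q.2 x else 0) = 0 := by
        intro q hq hne
        rw [if_neg]
        intro hqT
        exact hne (huT q hq hqT)
      show (∑ q ∈ S, if q.1 = T then a q * fourier q.2 x else 0) = _
      rw [Finset.sum_eq_single_of_mem (T, sT) hmemT h0]
      simp
    have hcB : c B = a (B, sB) * fourier sB x := by
      have h0 : ∀ q ∈ S, q ≠ (B, sB) → (if q.1 = B then a q * fourier q.2 x else 0) = 0 := by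
        intro q hq hne
        rw [if_neg]
        intro hqB
        exact hne (huB q hq hqB)
      show (∑ q ∈ S, if q.1 = B then a q * fourier q.2 x else 0) = _
      rw [Finset.sum_eq_single_of_mem (B, sB) hmemB h0]
      simp
    have hcTne : c T ≠ 0 := by
      rw [hcT]; exact mul_ne_zero haT (fourier_ne_zero _ _)
    have hcBne : c B ≠ 0 := by
      rw [hcB]; exact mul_ne_zero haB (fourier_ne_zero _ _)
    have heqx : ∀ n : ℤ, ∑ t ∈ Finset.Icc B T,
        c t * (fun v : ℤ => (f v : AddCircle (1:ℝ) → ℂ) x) (n - t) = 0 := by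
      intro n
      have e1 : ∀ t ∈ Finset.Icc B T,
          c t * (fun v : ℤ => (f v : AddCircle (1:ℝ) → ℂ) x) (n - t)
          = ∑ q ∈ S, (if q.1 = t then
              a q * fourier q.2 x * (f (n - t) : AddCircle (1:ℝ) → ℂ) x else 0) := by
        intro t _
        rw [hcdef, Finset.sum_mul]
        exact Finset.sum_congr rfl fun q _ => by rw [ite_mul, zero_mul]
      rw [Finset.sum_congr rfl e1, Finset.sum_comm]
      have e2 : ∀ q ∈ S, (∑ t ∈ Finset.Icc B T, if q.1 = t then
            a q * fourier q.2 x * (f (n - t) : AddCircle (1:ℝ) → ℂ) x else 0)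
          = a q * (fourier q.2 x * (f (n - q.1) : AddCircle (1:ℝ) → ℂ) x) := by
        intro q hq
        rw [Finset.sum_ite_eq (Finset.Icc B T) q.1
          (fun t => a q * fourier q.2 x * (f (n - t) : AddCircle (1:ℝ) → ℂ) x),
          if_pos (Finset.mem_Icc.mpr (hrange q hq)), mul_assoc]
      rw [Finset.sum_congr rfl e2]
      exact hx1 n
    exact l2_recurrence_zero hBT hcBne hcTne _ hx2 heqx
  have hfv : ∀ v : ℤ, f v = 0 := by
    intro v
    apply Lp.eq_zero_iff_ae_eq_zero.mpr
    filter_upwards [hmain] with x hx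
    exact hx v
  have hrow0 : ∀ v : ℤ, row v = 0 := by
    intro v
    have h9 := hrepr v
    rw [hfv v, map_zero] at h9
    exact h9.symm
  intro p
  have h10 : (↑(row p.1) : ℤ → ℂ) p.2 = 0 := by rw [hrow0 p.1]; rfl
  exact h10

open Complex

namespace KagomeAux

/-- The coordinate map `(a, b) ↦ a + b ω`. -/
noncomputable def ι (p : ℤ × ℤ) : ℂ := (p.1 : ℂ) + (p.2 : ℂ) * kagomeW₂

lemma w2_re : kagomeW₂.re = 1 / 2 := by
  have h : (↑Real.pi * Complex.I / 3) = (↑(Real.pi / 3) : ℂ) * Complex.I := by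
    push_cast; ring
  rw [kagomeW₂, h, Complex.exp_ofReal_mul_I_re, Real.cos_pi_div_three]

lemma w2_im : kagomeW₂.im = Real.sqrt 3 / 2 := by
  have h : (↑Real.pi * Complex.I / 3) = (↑(Real.pi / 3) : ℂ) * Complex.I := by
    push_cast; ring
  rw [kagomeW₂, h, Complex.exp_ofReal_mul_I_im, Real.sin_pi_div_three]

lemma ι_re (p : ℤ × ℤ) : (ι p).re = (p.1 : ℝ) + (p.2 : ℝ) * (1 / 2) := by
  simp [ι, Complex.add_re, Complex.mul_re, w2_re, w2_im]

lemma ι_im (p : ℤ × ℤ) : (ι p).im = (p.2 : ℝ) * (Real.sqrt 3 / 2) := by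
  simp [ι, Complex.add_im, Complex.mul_im, w2_re, w2_im]

lemma ι_inj' {p q : ℤ × ℤ} (h : ι p = ι q) : p.1 = q.1 ∧ p.2 = q.2 := by
  have him : (ι p).im = (ι q).im := by rw [h]
  have hre : (ι p).re = (ι q).re := by rw [h]
  rw [ι_im, ι_im] at him
  rw [ι_re, ι_re] at hre
  have h3 : (0:ℝ) < Real.sqrt 3 := Real.sqrt_pos.mpr (by norm_num)
  have h2 : (p.2 : ℝ) = (q.2 : ℝ) := by
    have := mul_right_cancel₀ (by positivity : (Real.sqrt 3 / 2 : ℝ) ≠ 0) him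
    exact this
  have hb : p.2 = q.2 := by exact_mod_cast h2
  have h1 : (p.1 : ℝ) = (q.1 : ℝ) := by rw [h2] at hre; linarith
  exact ⟨by exact_mod_cast h1, hb⟩

lemma normSq_ι (p : ℤ × ℤ) :
    Complex.normSq (ι p) = ((p.1:ℝ)^2 + (p.1:ℝ) * (p.2:ℝ) + (p.2:ℝ)^2) := by
  rw [Complex.normSq_apply, ι_re, ι_im]
  have h3 : Real.sqrt 3 ^ 2 = 3 := Real.sq_sqrt (by norm_num)
  nlinarith [h3]

lemma ι_sub (p q : ℤ × ℤ) : ι p - ι q = ι (p.1 - q.1, p.2 - q.2) := by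
  simp only [ι]
  push_cast
  ring

lemma habs (p q : ℤ × ℤ) :
    ‖ι p - ι q‖ = 1 ↔
      (p.1 - q.1)^2 + (p.1 - q.1) * (p.2 - q.2) + (p.2 - q.2)^2 = 1 := by
  rw [ι_sub]
  set r : ℤ × ℤ := (p.1 - q.1, p.2 - q.2) with hr
  have hns : Complex.normSq (ι r) = ((r.1:ℝ)^2 + (r.1:ℝ) * (r.2:ℝ) + (r.2:ℝ)^2) := normSq_ι r
  constructor
  · intro h
    have h2 : Complex.normSq (ι r) = 1 := by
      rw [← Complex.sq_norm, h]; norm_num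
    rw [hns] at h2
    exact_mod_cast h2
  · intro h
    have h2 : Complex.normSq (ι r) = 1 := by
      rw [hns]
      exact_mod_cast h
    rw [Complex.norm_def, h2, Real.sqrt_one]

lemma henum (x y : ℤ) (h : x^2 + x*y + y^2 = 1) :
    (x = 1 ∧ y = 0) ∨ (x = -1 ∧ y = 0) ∨ (x = 0 ∧ y = 1) ∨ (x = 0 ∧ y = -1) ∨
    (x = 1 ∧ y = -1) ∨ (x = -1 ∧ y = 1) := by
  have h3 : 3*y^2 ≤ 4 := by nlinarith [sq_nonneg (2*x + y)]
  have hy : -1 ≤ y ∧ y ≤ 1 := by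
    constructor <;> nlinarith [sq_nonneg (y-1), sq_nonneg (y+1)]
  have h4 : (2*x + y)^2 ≤ 4 := by nlinarith [sq_nonneg y]
  have hx : -1 ≤ x ∧ x ≤ 1 := by
    have h5 : -2 ≤ 2*x + y ∧ 2*x + y ≤ 2 := by
      constructor <;> nlinarith [sq_nonneg (2*x+y-2), sq_nonneg (2*x+y+2)]
    omega
  obtain ⟨hy1, hy2⟩ := hy
  obtain ⟨hx1, hx2⟩ := hx
  interval_cases x <;> interval_cases y <;> revert h <;> decide

/-- Good points: those not of odd-odd parity. -/
def good (p : ℤ × ℤ) : Prop := ¬(Odd p.1 ∧ Odd p.2)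

lemma mem_ι {p : ℤ × ℤ} (hp : good p) : ι p ∈ kagomeV := by
  rcases Int.even_or_odd p.1 with ⟨m, hm⟩ | ⟨m, hm⟩ <;>
    rcases Int.even_or_odd p.2 with ⟨n, hn⟩ | ⟨n, hn⟩
  · exact ⟨m, n, Or.inl (by simp only [ι, kagomeW₁]; push_cast [hm, hn]; ring)⟩
  · exact ⟨m, n, Or.inr (Or.inr (by simp only [ι, kagomeW₁]; push_cast [hm, hn]; ring))⟩
  · exact ⟨m, n, Or.inr (Or.inl (by simp only [ι, kagomeW₁]; push_cast [hm, hn]; ring))⟩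
  · exact absurd ⟨⟨m, hm⟩, ⟨n, hn⟩⟩ hp

lemma mem_inv {v : ℂ} (hv : v ∈ kagomeV) : ∃ p : ℤ × ℤ, good p ∧ v = ι p := by
  obtain ⟨m, n, h | h | h⟩ := hv
  · refine ⟨(2*m, 2*n), ?_, ?_⟩
    · rintro ⟨⟨k, hk⟩, -⟩; omega
    · rw [h]; simp only [ι, kagomeW₁]; push_cast; ring
  · refine ⟨(2*m+1, 2*n), ?_, ?_⟩
    · rintro ⟨-, ⟨k, hk⟩⟩; omega
    · rw [h]; simp only [ι, kagomeW₁]; push_cast; ring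
  · refine ⟨(2*m, 2*n+1), ?_, ?_⟩
    · rintro ⟨⟨k, hk⟩, -⟩; omega
    · rw [h]; simp only [ι, kagomeW₁]; push_cast; ring

lemma not_mem {p : ℤ × ℤ} (h1 : Odd p.1) (h2 : Odd p.2) : ι p ∉ kagomeV := by
  intro hv
  obtain ⟨q, hq, hpq⟩ := mem_inv hv
  obtain ⟨e1, e2⟩ := ι_inj' hpq
  exact hq ⟨by rwa [← e1], by rwa [← e2]⟩

end KagomeAux

namespace KagomeAux

lemma habs' (a b c d : ℤ) :
    ‖ι (a, b) - ι (c, d)‖ = 1 ↔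
      (a - c)^2 + (a - c) * (b - d) + (b - d)^2 = 1 :=
  habs (a, b) (c, d)

lemma ιne {a b a' b' : ℤ} (h : ¬(a = a' ∧ b = b')) : ι (a, b) ≠ ι (a', b') :=
  fun hh => h ⟨(ι_inj' hh).1, (ι_inj' hh).2⟩

lemma good_of (a b : ℤ) (h : a % 2 = 0 ∨ b % 2 = 0) : good (a, b) := by
  rintro ⟨⟨k, hk⟩, ⟨l, hl⟩⟩
  simp only at hk hl
  omega

lemma tsum_adj_eq (v : ℂ) (t : Finset ℂ) (hset : ∀ w, kagomeAdj v w ↔ w ∈ t) (F : ℂ → ℝ) :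
    ∑' w : {w : ℂ // kagomeAdj v w}, F (w : ℂ) = ∑ w ∈ t, F w := by
  rw [← Finset.tsum_subtype t F]
  exact Equiv.tsum_eq (Equiv.subtypeEquivRight hset) (fun w : {x : ℂ // x ∈ t} => F (w : ℂ))

section Master

lemma masterA (g : ℂ → ℝ) (μ : ℝ)
    (heig : ∀ v ∈ kagomeV, kagomeLap g v = μ * g v) (m n : ℤ) :
    g (ι (2*m+1, 2*n)) + g (ι (2*m-1, 2*n)) + g (ι (2*m, 2*n+1)) + g (ι (2*m, 2*n-1))
      = (4 - 4*μ) * g (ι (2*m, 2*n)) := by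
  have hgoodp : good (2*m, 2*n) := good_of _ _ (by omega)
  have hv : ι (2*m, 2*n) ∈ kagomeV := mem_ι hgoodp
  set t : Finset ℂ :=
    {ι (2*m+1, 2*n), ι (2*m-1, 2*n), ι (2*m, 2*n+1), ι (2*m, 2*n-1)} with ht
  have hset : ∀ w, kagomeAdj (ι (2*m, 2*n)) w ↔ w ∈ t := by
    intro w
    constructor
    · rintro ⟨-, hwV, hdist⟩
      obtain ⟨q, hqgood, rfl⟩ := mem_inv hwV
      have hdist' : (2*m - q.1)^2 + (2*m - q.1) * (2*n - q.2) + (2*n - q.2)^2 = 1 :=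
        (habs' (2*m) (2*n) q.1 q.2).mp hdist
      have hq12 : q = (q.1, q.2) := rfl
      rcases henum _ _ hdist' with ⟨h1, h2⟩ | ⟨h1, h2⟩ | ⟨h1, h2⟩ | ⟨h1, h2⟩ |
        ⟨h1, h2⟩ | ⟨h1, h2⟩
      · rw [hq12, show q.1 = 2*m-1 by omega, show q.2 = 2*n by omega]
        simp [ht]
      · rw [hq12, show q.1 = 2*m+1 by omega, show q.2 = 2*n by omega]
        simp [ht]
      · rw [hq12, show q.1 = 2*m by omega, show q.2 = 2*n-1 by omega]
        simp [ht]
      · rw [hq12, show q.1 = 2*m by omega, show q.2 = 2*n+1 by omega]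
        simp [ht]
      · exact absurd ⟨⟨m-1, by omega⟩, ⟨n, by omega⟩⟩ hqgood
      · exact absurd ⟨⟨m, by omega⟩, ⟨n-1, by omega⟩⟩ hqgood
    · intro hw
      simp only [ht, Finset.mem_insert, Finset.mem_singleton] at hw
      rcases hw with rfl | rfl | rfl | rfl
      · exact ⟨hv, mem_ι (good_of _ _ (by omega)), (habs' _ _ _ _).mpr (by ring)⟩
      · exact ⟨hv, mem_ι (good_of _ _ (by omega)), (habs' _ _ _ _).mpr (by ring)⟩
      · exact ⟨hv, mem_ι (good_of _ _ (by omega)), (habs' _ _ _ _).mpr (by ring)⟩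
      · exact ⟨hv, mem_ι (good_of _ _ (by omega)), (habs' _ _ _ _).mpr (by ring)⟩
  have htsum := tsum_adj_eq (ι (2*m, 2*n)) t hset (fun w => g (ι (2*m, 2*n)) - g w)
  have hL := heig _ hv
  rw [kagomeLap] at hL
  rw [htsum] at hL
  have hne1 : ι (2*m+1, 2*n) ∉ ({ι (2*m-1, 2*n), ι (2*m, 2*n+1), ι (2*m, 2*n-1)} : Finset ℂ) := by
    simp only [Finset.mem_insert, Finset.mem_singleton]
    push_neg
    exact ⟨ιne (by omega), ιne (by omega), ιne (by omega)⟩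
  have hne2 : ι (2*m-1, 2*n) ∉ ({ι (2*m, 2*n+1), ι (2*m, 2*n-1)} : Finset ℂ) := by
    simp only [Finset.mem_insert, Finset.mem_singleton]
    push_neg
    exact ⟨ιne (by omega), ιne (by omega)⟩
  have hne3 : ι (2*m, 2*n+1) ∉ ({ι (2*m, 2*n-1)} : Finset ℂ) := by
    simp only [Finset.mem_singleton]
    exact ιne (by omega)
  rw [ht] at hL
  rw [Finset.sum_insert hne1, Finset.sum_insert hne2, Finset.sum_insert hne3,
    Finset.sum_singleton] at hL
  linarith

lemma masterB (g : ℂ → ℝ) (μ : ℝ)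
    (heig : ∀ v ∈ kagomeV, kagomeLap g v = μ * g v) (m n : ℤ) :
    g (ι (2*m+2, 2*n)) + g (ι (2*m, 2*n)) + g (ι (2*m+2, 2*n-1)) + g (ι (2*m, 2*n+1))
      = (4 - 4*μ) * g (ι (2*m+1, 2*n)) := by
  have hgoodp : good (2*m+1, 2*n) := good_of _ _ (by omega)
  have hv : ι (2*m+1, 2*n) ∈ kagomeV := mem_ι hgoodp
  set t : Finset ℂ :=
    {ι (2*m+2, 2*n), ι (2*m, 2*n), ι (2*m+2, 2*n-1), ι (2*m, 2*n+1)} with ht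
  have hset : ∀ w, kagomeAdj (ι (2*m+1, 2*n)) w ↔ w ∈ t := by
    intro w
    constructor
    · rintro ⟨-, hwV, hdist⟩
      obtain ⟨q, hqgood, rfl⟩ := mem_inv hwV
      have hdist' : (2*m+1 - q.1)^2 + (2*m+1 - q.1) * (2*n - q.2) + (2*n - q.2)^2 = 1 :=
        (habs' (2*m+1) (2*n) q.1 q.2).mp hdist
      have hq12 : q = (q.1, q.2) := rfl
      rcases henum _ _ hdist' with ⟨h1, h2⟩ | ⟨h1, h2⟩ | ⟨h1, h2⟩ | ⟨h1, h2⟩ |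
        ⟨h1, h2⟩ | ⟨h1, h2⟩
      · rw [hq12, show q.1 = 2*m by omega, show q.2 = 2*n by omega]
        simp [ht]
      · rw [hq12, show q.1 = 2*m+2 by omega, show q.2 = 2*n by omega]
        simp [ht]
      · exact absurd ⟨⟨m, by omega⟩, ⟨n-1, by omega⟩⟩ hqgood
      · exact absurd ⟨⟨m, by omega⟩, ⟨n, by omega⟩⟩ hqgood
      · rw [hq12, show q.1 = 2*m by omega, show q.2 = 2*n+1 by omega]
        simp [ht]
      · rw [hq12, show q.1 = 2*m+2 by omega, show q.2 = 2*n-1 by omega]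
        simp [ht]
    · intro hw
      simp only [ht, Finset.mem_insert, Finset.mem_singleton] at hw
      rcases hw with rfl | rfl | rfl | rfl
      · exact ⟨hv, mem_ι (good_of _ _ (by omega)), (habs' _ _ _ _).mpr (by ring)⟩
      · exact ⟨hv, mem_ι (good_of _ _ (by omega)), (habs' _ _ _ _).mpr (by ring)⟩
      · exact ⟨hv, mem_ι (good_of _ _ (by omega)), (habs' _ _ _ _).mpr (by ring)⟩
      · exact ⟨hv, mem_ι (good_of _ _ (by omega)), (habs' _ _ _ _).mpr (by ring)⟩
  have htsum := tsum_adj_eq (ι (2*m+1, 2*n)) t hset (fun w => g (ι (2*m+1, 2*n)) - g w)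
  have hL := heig _ hv
  rw [kagomeLap] at hL
  rw [htsum] at hL
  have hne1 : ι (2*m+2, 2*n) ∉ ({ι (2*m, 2*n), ι (2*m+2, 2*n-1), ι (2*m, 2*n+1)} : Finset ℂ) := by
    simp only [Finset.mem_insert, Finset.mem_singleton]
    push_neg
    exact ⟨ιne (by omega), ιne (by omega), ιne (by omega)⟩
  have hne2 : ι (2*m, 2*n) ∉ ({ι (2*m+2, 2*n-1), ι (2*m, 2*n+1)} : Finset ℂ) := by
    simp only [Finset.mem_insert, Finset.mem_singleton]
    push_neg
    exact ⟨ιne (by omega), ιne (by omega)⟩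
  have hne3 : ι (2*m+2, 2*n-1) ∉ ({ι (2*m, 2*n+1)} : Finset ℂ) := by
    simp only [Finset.mem_singleton]
    exact ιne (by omega)
  rw [ht] at hL
  rw [Finset.sum_insert hne1, Finset.sum_insert hne2, Finset.sum_insert hne3,
    Finset.sum_singleton] at hL
  linarith

lemma masterC (g : ℂ → ℝ) (μ : ℝ)
    (heig : ∀ v ∈ kagomeV, kagomeLap g v = μ * g v) (m n : ℤ) :
    g (ι (2*m, 2*n)) + g (ι (2*m, 2*n+2)) + g (ι (2*m-1, 2*n+2)) + g (ι (2*m+1, 2*n))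
      = (4 - 4*μ) * g (ι (2*m, 2*n+1)) := by
  have hgoodp : good (2*m, 2*n+1) := good_of _ _ (by omega)
  have hv : ι (2*m, 2*n+1) ∈ kagomeV := mem_ι hgoodp
  set t : Finset ℂ :=
    {ι (2*m, 2*n), ι (2*m, 2*n+2), ι (2*m-1, 2*n+2), ι (2*m+1, 2*n)} with ht
  have hset : ∀ w, kagomeAdj (ι (2*m, 2*n+1)) w ↔ w ∈ t := by
    intro w
    constructor
    · rintro ⟨-, hwV, hdist⟩
      obtain ⟨q, hqgood, rfl⟩ := mem_inv hwV
      have hdist' : (2*m - q.1)^2 + (2*m - q.1) * (2*n+1 - q.2) + (2*n+1 - q.2)^2 = 1 :=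
        (habs' (2*m) (2*n+1) q.1 q.2).mp hdist
      have hq12 : q = (q.1, q.2) := rfl
      rcases henum _ _ hdist' with ⟨h1, h2⟩ | ⟨h1, h2⟩ | ⟨h1, h2⟩ | ⟨h1, h2⟩ |
        ⟨h1, h2⟩ | ⟨h1, h2⟩
      · exact absurd ⟨⟨m-1, by omega⟩, ⟨n, by omega⟩⟩ hqgood
      · exact absurd ⟨⟨m, by omega⟩, ⟨n, by omega⟩⟩ hqgood
      · rw [hq12, show q.1 = 2*m by omega, show q.2 = 2*n by omega]
        simp [ht]
      · rw [hq12, show q.1 = 2*m by omega, show q.2 = 2*n+2 by omega]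
        simp [ht]
      · rw [hq12, show q.1 = 2*m-1 by omega, show q.2 = 2*n+2 by omega]
        simp [ht]
      · rw [hq12, show q.1 = 2*m+1 by omega, show q.2 = 2*n by omega]
        simp [ht]
    · intro hw
      simp only [ht, Finset.mem_insert, Finset.mem_singleton] at hw
      rcases hw with rfl | rfl | rfl | rfl
      · exact ⟨hv, mem_ι (good_of _ _ (by omega)), (habs' _ _ _ _).mpr (by ring)⟩
      · exact ⟨hv, mem_ι (good_of _ _ (by omega)), (habs' _ _ _ _).mpr (by ring)⟩
      · exact ⟨hv, mem_ι (good_of _ _ (by omega)), (habs' _ _ _ _).mpr (by ring)⟩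
      · exact ⟨hv, mem_ι (good_of _ _ (by omega)), (habs' _ _ _ _).mpr (by ring)⟩
  have htsum := tsum_adj_eq (ι (2*m, 2*n+1)) t hset (fun w => g (ι (2*m, 2*n+1)) - g w)
  have hL := heig _ hv
  rw [kagomeLap] at hL
  rw [htsum] at hL
  have hne1 : ι (2*m, 2*n) ∉ ({ι (2*m, 2*n+2), ι (2*m-1, 2*n+2), ι (2*m+1, 2*n)} : Finset ℂ) := by
    simp only [Finset.mem_insert, Finset.mem_singleton]
    push_neg
    exact ⟨ιne (by omega), ιne (by omega), ιne (by omega)⟩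
  have hne2 : ι (2*m, 2*n+2) ∉ ({ι (2*m-1, 2*n+2), ι (2*m+1, 2*n)} : Finset ℂ) := by
    simp only [Finset.mem_insert, Finset.mem_singleton]
    push_neg
    exact ⟨ιne (by omega), ιne (by omega)⟩
  have hne3 : ι (2*m-1, 2*n+2) ∉ ({ι (2*m+1, 2*n)} : Finset ℂ) := by
    simp only [Finset.mem_singleton]
    exact ιne (by omega)
  rw [ht] at hL
  rw [Finset.sum_insert hne1, Finset.sum_insert hne2, Finset.sum_insert hne3,
    Finset.sum_singleton] at hL
  linarith

end Master

end KagomeAux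

/-- The skew change of coordinates `(v, u) ↦ (u, v - k u)` on `ℤ²`. -/
private def skewEquiv (k : ℤ) : ℤ × ℤ ≃ ℤ × ℤ where
  toFun r := (r.2, r.1 - k * r.2)
  invFun c := (k * c.1 + c.2, c.1)
  left_inv r := by
    obtain ⟨v, u⟩ := r
    simp only [Prod.mk.injEq]
    exact ⟨by ring, trivial⟩
  right_inv c := by
    obtain ⟨m, n⟩ := c
    simp only [Prod.mk.injEq]
    exact ⟨trivial, by ring⟩

/-- Real-valued reformulation of `conv_l2_zero`, with the skew transform built in. -/
private lemma conv_l2_zero_real (F : ℤ → ℤ → ℝ) (k : ℤ)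
    (hF : Summable fun c : ℤ × ℤ => (F c.1 c.2) ^ 2)
    (a : ℤ × ℤ → ℂ) (S : Finset (ℤ × ℤ))
    (B T sB sT : ℤ) (hBT : B ≤ T)
    (hrange : ∀ q ∈ S, B ≤ q.1 ∧ q.1 ≤ T)
    (hmemT : (T, sT) ∈ S) (hmemB : (B, sB) ∈ S)
    (haT : a (T, sT) ≠ 0) (haB : a (B, sB) ≠ 0)
    (huT : ∀ q ∈ S, q.1 = T → q = (T, sT))
    (huB : ∀ q ∈ S, q.1 = B → q = (B, sB))
    (heq : ∀ m n : ℤ, ∑ q ∈ S, a q * ((F (m - q.2) (n - (q.1 - k * q.2)) : ℝ) : ℂ) = 0) :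
    ∀ m n : ℤ, F m n = 0 := by
  set H : ℤ × ℤ → ℂ := fun r => ((F r.2 (r.1 - k * r.2) : ℝ) : ℂ) with hHdef
  have hH : Summable fun p : ℤ × ℤ => ‖H p‖ ^ 2 := by
    have h1 : Summable ((fun c : ℤ × ℤ => (F c.1 c.2) ^ 2) ∘ (skewEquiv k)) :=
      (Equiv.summable_iff (skewEquiv k)).mpr hF
    apply h1.congr
    intro p
    simp only [Function.comp_apply, skewEquiv, Equiv.coe_fn_mk, hHdef]
    rw [Complex.norm_real, Real.norm_eq_abs, _root_.sq_abs]
  have heq2 : ∀ v u : ℤ, ∑ q ∈ S, a q * H (v - q.1, u - q.2) = 0 := by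
    intro v u
    have h2 : ∀ q ∈ S, a q * H (v - q.1, u - q.2)
        = a q * ((F (u - q.2) ((v - k * u) - (q.1 - k * q.2)) : ℝ) : ℂ) := by
      intro q _
      congr 1
      simp only [hHdef]
      norm_cast
      congr 1
      ring
    rw [Finset.sum_congr rfl h2]
    exact heq u (v - k * u)
  have hzero := conv_l2_zero a S B T sB sT hBT hrange hmemT hmemB haT haB huT huB H hH heq2
  intro m n
  have h3 := hzero (k * m + n, m)
  have h4 : H (k * m + n, m) = ((F m n : ℝ) : ℂ) := by
    simp only [hHdef]
    norm_cast
    congr 1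
    ring
  rw [h4] at h3
  exact_mod_cast h3

private lemma summable_sq_add3 (f1 f2 f3 : ℤ × ℤ → ℝ)
    (h1 : Summable fun c => (f1 c) ^ 2) (h2 : Summable fun c => (f2 c) ^ 2)
    (h3 : Summable fun c => (f3 c) ^ 2) :
    Summable fun c => (f1 c + f2 c + f3 c) ^ 2 := by
  apply Summable.of_nonneg_of_le (fun c => sq_nonneg _) (fun c => ?_)
    (((h1.add h2).add h3).mul_left 3)
  nlinarith [sq_nonneg (f1 c - f2 c), sq_nonneg (f1 c - f3 c), sq_nonneg (f2 c - f3 c)]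

private lemma inj2 (x y : ℤ) : Function.Injective (fun c : ℤ × ℤ => (2*c.1 + x, 2*c.2 + y)) := by
  intro c c' h
  have h1 := congrArg Prod.fst h
  have h2 := congrArg Prod.snd h
  simp only at h1 h2
  exact Prod.ext_iff.mpr ⟨by omega, by omega⟩

/-- `w₀` is the centre of a hexagon of the Kagome lattice: its six prospective vertices
`w₀ + e^{kπi/3}`, `k = 0,…,5`, all belong to the lattice. -/
def IsHexCenter (w₀ : ℂ) : Prop :=
  ∀ k : Fin 6, w₀ + Complex.exp (((k : ℕ) : ℂ) * Real.pi * Complex.I / 3) ∈ kagomeV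

/-- The alternating `±1` function supported on the vertices of the hexagon with centre `w₀`:
`F_H(v) = (-1)^k` if `v = w₀ + e^{kπi/3}` and `0` otherwise. -/
noncomputable def hexFun (w₀ : ℂ) : ℂ → ℝ := fun v =>
  if h : ∃ k : Fin 6, v = w₀ + Complex.exp (((k : ℕ) : ℂ) * Real.pi * Complex.I / 3) then
    (-1 : ℝ) ^ ((h.choose : ℕ)) else 0

/-- If `g ∈ ℓ²(V)` is a nonzero eigenfunction of the combinatorial Laplacian
of the Kagome lattice, `Δ_comb g = μ g`, then `μ = 3/2`. -/
theorem l2_eigenvalue_is_three_halves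
    (g : ℂ → ℝ) (hzero : ∀ v ∉ kagomeV, g v = 0)
    (hl2 : Summable (fun v : kagomeV => (g (v : ℂ)) ^ 2))
    (hne : ∃ v ∈ kagomeV, g v ≠ 0)
    (μ : ℝ) (heig : ∀ v ∈ kagomeV, kagomeLap g v = μ * g v) :
    μ = 3 / 2 := by
  classical
  by_contra hμne
  set G : ℤ → ℤ → ℝ := fun a b => g (KagomeAux.ι (a, b)) with hGdef
  have eqA : ∀ m n : ℤ, G (2*m+1) (2*n) + G (2*m-1) (2*n) + G (2*m) (2*n+1) + G (2*m) (2*n-1)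
      = (4 - 4*μ) * G (2*m) (2*n) := fun m n => KagomeAux.masterA g μ heig m n
  have eqB : ∀ m n : ℤ, G (2*m+2) (2*n) + G (2*m) (2*n) + G (2*m+2) (2*n-1) + G (2*m) (2*n+1)
      = (4 - 4*μ) * G (2*m+1) (2*n) := fun m n => KagomeAux.masterB g μ heig m n
  have eqC : ∀ m n : ℤ, G (2*m) (2*n) + G (2*m) (2*n+2) + G (2*m-1) (2*n+2) + G (2*m+1) (2*n)
      = (4 - 4*μ) * G (2*m) (2*n+1) := fun m n => KagomeAux.masterC g μ heig m n
  -- square-summability of `G` over `ℤ²`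
  have hG2 : Summable fun p : ℤ × ℤ => (G p.1 p.2) ^ 2 := by
    set s : Set (ℤ × ℤ) := {p | KagomeAux.good p} with hs
    have h1 : Summable fun p : ↥s => (G (p : ℤ × ℤ).1 (p : ℤ × ℤ).2) ^ 2 := by
      have hinj : Function.Injective
          (fun p : {p : ℤ × ℤ // KagomeAux.good p} =>
            (⟨KagomeAux.ι p.1, KagomeAux.mem_ι p.2⟩ : kagomeV)) := by
        intro p q h
        have h1 : KagomeAux.ι p.1 = KagomeAux.ι q.1 := Subtype.ext_iff.mp h
        exact Subtype.ext (Prod.ext_iff.mpr (KagomeAux.ι_inj' h1))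
      have h2 := hl2.comp_injective hinj
      apply h2.congr
      intro p
      rfl
    have h0 : Summable fun p : ↥sᶜ => (G (p : ℤ × ℤ).1 (p : ℤ × ℤ).2) ^ 2 := by
      apply summable_zero.congr
      intro p
      have hbad : ¬ KagomeAux.good (p : ℤ × ℤ) := p.2
      have hodd := not_not.mp hbad
      have hz : g (KagomeAux.ι (p : ℤ × ℤ)) = 0 :=
        hzero _ (KagomeAux.not_mem hodd.1 hodd.2)
      simp only [hGdef]
      rw [show ((p : ℤ × ℤ).1, (p : ℤ × ℤ).2) = (p : ℤ × ℤ) from rfl, hz]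
      norm_num
    exact summable_subtype_and_compl.mp ⟨h1, h0⟩
  -- P and Q : sums over up- and down-triangles
  set P : ℤ → ℤ → ℝ := fun m n => G (2*m) (2*n) + G (2*m+1) (2*n) + G (2*m) (2*n+1) with hPdef
  set Q : ℤ → ℤ → ℝ := fun m n => G (2*m) (2*n) + G (2*m-1) (2*n) + G (2*m) (2*n-1) with hQdef
  set ν : ℝ := 3 - 4*μ with hνdef
  have E1 : ∀ m n : ℤ, ν * P m n = Q m n + Q (m+1) n + Q m (n+1) := by
    intro m n
    have hA := eqA m n
    have hB := eqB m n
    have hC := eqC m n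
    simp only [hPdef, hQdef, hνdef]
    ring_nf
    ring_nf at hA hB hC
    linear_combination - hA - hB - hC
  have E2 : ∀ m n : ℤ, ν * Q m n = P m n + P (m-1) n + P m (n-1) := by
    intro m n
    have hA := eqA m n
    have hB := eqB (m-1) n
    have hC := eqC m (n-1)
    simp only [hPdef, hQdef, hνdef]
    ring_nf
    ring_nf at hA hB hC
    linear_combination - hA - hB - hC
  -- square-summability of P and Q
  have hPsum : Summable fun c : ℤ × ℤ => (P c.1 c.2) ^ 2 := by
    simp only [hPdef]
    apply summable_sq_add3
    · apply (hG2.comp_injective (inj2 0 0)).congr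
      intro c
      norm_num
    · apply (hG2.comp_injective (inj2 1 0)).congr
      intro c
      norm_num
    · apply (hG2.comp_injective (inj2 0 1)).congr
      intro c
      norm_num
  have hQsum : Summable fun c : ℤ × ℤ => (Q c.1 c.2) ^ 2 := by
    simp only [hQdef]
    apply summable_sq_add3
    · apply (hG2.comp_injective (inj2 0 0)).congr
      intro c
      norm_num
    · apply (hG2.comp_injective (inj2 (-1) 0)).congr
      intro c
      norm_num [sub_eq_add_neg]
    · apply (hG2.comp_injective (inj2 0 (-1))).congr
      intro c
      norm_num [sub_eq_add_neg]
  -- P and Q vanish identically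
  have hPQ : (∀ m n : ℤ, P m n = 0) ∧ (∀ m n : ℤ, Q m n = 0) := by
    rcases eq_or_ne ν 0 with hν0 | hν0
    · have hDP : ∀ m n : ℤ, P m n + P (m-1) n + P m (n-1) = 0 := by
        intro m n
        have h := E2 m n
        rw [hν0, zero_mul] at h
        linarith
      have hDQ : ∀ m n : ℤ, Q m n + Q (m+1) n + Q m (n+1) = 0 := by
        intro m n
        have h := E1 m n
        rw [hν0, zero_mul] at h
        linarith
      constructor
      · apply conv_l2_zero_real P 2 hPsum (fun _ => 1)
          ({(0,0), (2,1), (1,0)} : Finset (ℤ × ℤ)) 0 2 0 1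
          (by norm_num) (by decide) (by decide) (by decide) one_ne_zero one_ne_zero
          (by decide) (by decide) ?_
        intro m n
        rw [Finset.sum_insert (by decide), Finset.sum_insert (by decide), Finset.sum_singleton]
        simp only [one_mul]
        norm_num
        norm_cast
        linarith [hDP m n]
      · apply conv_l2_zero_real Q 2 hQsum (fun _ => 1)
          ({(0,0), (-2,-1), (-1,0)} : Finset (ℤ × ℤ)) (-2) 0 (-1) 0
          (by norm_num) (by decide) (by decide) (by decide) one_ne_zero one_ne_zero
          (by decide) (by decide) ?_
        intro m n
        rw [Finset.sum_insert (by decide), Finset.sum_insert (by decide), Finset.sum_singleton]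
        simp only [one_mul]
        norm_num
        norm_cast
        linarith [hDQ m n]
    · have hDDP : ∀ m n : ℤ, (3 - ν^2) * P m n + (P (m+1) n + P (m-1) n + P m (n+1)
          + P m (n-1) + P (m+1) (n-1) + P (m-1) (n+1)) = 0 := by
        intro m n
        have h1 := E1 m n
        have h2 := E2 m n
        have h3 := E2 (m+1) n
        have h4 := E2 m (n+1)
        rw [show (m+1-1 : ℤ) = m by ring] at h3
        rw [show (n+1-1 : ℤ) = n by ring] at h4
        linear_combination - h2 - h3 - h4 - ν * h1
      have hP0 : ∀ m n : ℤ, P m n = 0 := by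
        apply conv_l2_zero_real P 3 hPsum
          (fun q => if q = ((0 : ℤ), (0 : ℤ)) then ((3 - ν^2 : ℝ) : ℂ) else 1)
          ({(0,0), (3,1), (-3,-1), (1,0), (-1,0), (2,1), (-2,-1)} : Finset (ℤ × ℤ))
          (-3) 3 (-1) 1
          (by norm_num) (by decide) (by decide) (by decide)
          (by simp) (by simp) (by decide) (by decide) ?_
        intro m n
        rw [Finset.sum_insert (by decide), Finset.sum_insert (by decide),
          Finset.sum_insert (by decide), Finset.sum_insert (by decide),
          Finset.sum_insert (by decide), Finset.sum_insert (by decide),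
          Finset.sum_singleton]
        norm_num [Prod.mk.injEq]
        have h := hDDP m n
        norm_cast
        have h' := congrArg (fun x : ℝ => (x : ℂ)) (by linear_combination h : (3 - ν ^ 2) * P m n + (P (m - 1) n + (P (m + 1) n + (P m (n - 1) + (P m (n + 1) + (P (m - 1) (n + 1) + P (m + 1) (n - 1)))))) = 0)
        push_cast at h' ⊢
        linear_combination h'
      refine ⟨hP0, fun m n => ?_⟩
      have h := E2 m n
      rw [hP0 m n, hP0 (m-1) n, hP0 m (n-1)] at h
      have h2 : ν * Q m n = 0 := by linarith
      exact (mul_eq_zero.mp h2).resolve_left hν0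
  obtain ⟨hP0, hQ0⟩ := hPQ
  have hlamne : (4 - 4*μ) + 2 ≠ 0 := fun h => hμne (by linarith)
  have hA0 : ∀ m n : ℤ, G (2*m) (2*n) = 0 := by
    intro m n
    have h1 := eqA m n
    have h2 := hP0 m n
    have h3 := hQ0 m n
    simp only [hPdef, hQdef] at h2 h3
    have h4 : ((4 - 4*μ) + 2) * G (2*m) (2*n) = 0 := by linear_combination h2 + h3 - h1
    exact (mul_eq_zero.mp h4).resolve_left hlamne
  have hB0 : ∀ m n : ℤ, G (2*m+1) (2*n) = 0 := by
    intro m n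
    have h1 := eqB m n
    have h2 := hP0 m n
    have h3 := hQ0 (m+1) n
    simp only [hPdef, hQdef] at h2 h3
    ring_nf at h1 h2 h3
    have h4 : ((4 - 4*μ) + 2) * G (2*m+1) (2*n) = 0 := by
      ring_nf
      linear_combination h2 + h3 - h1
    exact (mul_eq_zero.mp h4).resolve_left hlamne
  have hC0 : ∀ m n : ℤ, G (2*m) (2*n+1) = 0 := by
    intro m n
    have h1 := eqC m n
    have h2 := hP0 m n
    have h3 := hQ0 m (n+1)
    simp only [hPdef, hQdef] at h2 h3
    ring_nf at h1 h2 h3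
    have h4 : ((4 - 4*μ) + 2) * G (2*m) (2*n+1) = 0 := by
      ring_nf
      linear_combination h2 + h3 - h1
    exact (mul_eq_zero.mp h4).resolve_left hlamne
  obtain ⟨v, hvV, hgne⟩ := hne
  obtain ⟨p, hpgood, rfl⟩ := KagomeAux.mem_inv hvV
  apply hgne
  rcases Int.even_or_odd p.1 with ⟨k, hk⟩ | ⟨k, hk⟩ <;>
    rcases Int.even_or_odd p.2 with ⟨l, hl⟩ | ⟨l, hl⟩
  · rw [show p = (2*k, 2*l) from Prod.ext_iff.mpr ⟨by omega, by omega⟩]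
    exact hA0 k l
  · rw [show p = (2*k, 2*l+1) from Prod.ext_iff.mpr ⟨by omega, by omega⟩]
    exact hC0 k l
  · rw [show p = (2*k+1, 2*l) from Prod.ext_iff.mpr ⟨by omega, by omega⟩]
    exact hB0 k l
  · exact absurd ⟨⟨k, by omega⟩, ⟨l, by omega⟩⟩ hpgood
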